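/- Let (Z_k)_{k∈ℕ} be i.i.d. random variables with the exponential distribution of rate 1, and S_∞ = ∑_{k=1}^∞ 2^{-k} Z_k. Then for all j ∈ ℕ, P(S_∞ ≤ 2^{-j}) ≤ 2^{-j(j-1)/2}. -/

import Mathlib

open MeasureTheory ProbabilityTheory

open Real Set ENNReal

lemma aux_prod_zpow (f : ℕ → ℤ) (s : Finset ℕ) :
    ∏ k ∈ s, (2:ℝ) ^ (f k) = (2:ℝ) ^ (∑ k ∈ s, f k) := by
  induction s using Finset.cons_induction with
  | empty => simp
  | cons a s ha ih => rw [Finset.prod_cons, Finset.sum_cons, zpow_add₀ (by norm_num), ih]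

lemma aux_sum_exponent (j : ℕ) :
    (∑ k ∈ Finset.range j, ((k:ℤ) + 1 - j)) = -((j * (j - 1) / 2 : ℕ) : ℤ) := by
  rcases j with _ | n
  · simp
  · have h2 : (∑ k ∈ Finset.range (n+1), k) * 2 = (n + 1) * n := by
      simpa using Finset.sum_range_id_mul_two (n+1)
    have h4 : (n+1) * ((n+1) - 1) / 2 = ∑ k ∈ Finset.range (n+1), k := by
      simp only [Nat.add_sub_cancel]
      rw [← h2, Nat.mul_div_cancel _ two_pos]
    rw [h4]
    have h2' := congrArg (Nat.cast : ℕ → ℤ) h2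
    push_cast at h2'
    rw [Finset.sum_sub_distrib, Finset.sum_add_distrib]
    simp only [Finset.sum_const, Finset.card_range, nsmul_eq_mul, mul_one]
    push_cast
    linarith

lemma aux_expMeasure_Iic (x : ℝ) :
    expMeasure 1 (Iic x) = ENNReal.ofReal (if 0 ≤ x then 1 - exp (-(1 * x)) else 0) := by
  rw [expMeasure, gammaMeasure, withDensity_apply _ measurableSet_Iic]
  exact lintegral_exponentialPDF_eq_antiDeriv zero_lt_one x

lemma aux_expMeasure_Iio : expMeasure 1 (Iio (0:ℝ)) = 0 := by
  rw [expMeasure, gammaMeasure, withDensity_apply _ measurableSet_Iio]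
  rw [setLIntegral_congr_fun measurableSet_Iio
    (fun a (ha : a < 0) => gammaPDF_of_neg ha)]
  simp

lemma aux_moment : ∫⁻ x, ENNReal.ofReal x ∂(expMeasure 1) ≠ ∞ := by
  rw [expMeasure, gammaMeasure,
    lintegral_withDensity_eq_lintegral_mul _ (show Measurable (gammaPDF 1 1) from (measurable_gammaPDFReal 1 1).ennreal_ofReal)
      ENNReal.measurable_ofReal]
  have hbound : ∀ x : ℝ, (gammaPDF 1 1 * fun x => ENNReal.ofReal x) x
      ≤ (Ioi (0:ℝ)).indicator (fun x => ENNReal.ofReal (2 * exp (-(2⁻¹ * x)))) x := by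
    intro x
    simp only [Pi.mul_apply]
    rcases le_or_gt x 0 with hx | hx
    · simp [ENNReal.ofReal_of_nonpos hx]
    · rw [Set.indicator_of_mem (show x ∈ Ioi (0:ℝ) from hx)]
      have h1 : gammaPDF 1 1 x = ENNReal.ofReal (exp (-x)) := by
        rw [show gammaPDF 1 1 x = exponentialPDF 1 x from rfl,
          exponentialPDF_of_nonneg hx.le]
        norm_num
      rw [h1, ← ENNReal.ofReal_mul (exp_pos _).le]
      apply ENNReal.ofReal_le_ofReal
      have h2 : x / 2 ≤ exp (x / 2) := le_trans (by linarith) (Real.add_one_le_exp _)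
      have h3 : exp (x/2) * exp (-x) = exp (-(2⁻¹ * x)) := by
        rw [← Real.exp_add]; ring_nf
      nlinarith [exp_pos (-x), exp_pos (-(2⁻¹ * x))]
  refine ne_of_lt (lt_of_le_of_lt (lintegral_mono hbound) ?_)
  rw [lintegral_indicator measurableSet_Ioi]
  have hInt : IntegrableOn (fun x => 2 * rexp (-(2⁻¹ * x))) (Ioi (0:ℝ)) volume := by
    simp only [← neg_mul]
    exact (exp_neg_integrableOn_Ioi 0 (by norm_num)).const_mul 2
  exact hInt.setLIntegral_lt_top

/-- For `(Z k)` i.i.d. `Exp(1)` (here `Z k` plays the role of `Z_{k+1}`) and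
`S_∞ = ∑_{k=1}^∞ 2^{-k} Z_k`, we have `P(S_∞ ≤ 2^{-j}) ≤ 2^{-j(j-1)/2}` for all `j ∈ ℕ`. -/
theorem stmt10 {Ω : Type*} [MeasureSpace Ω] [IsProbabilityMeasure (ℙ : Measure Ω)]
    (Z : ℕ → Ω → ℝ) (hmeas : ∀ k, Measurable (Z k))
    (hindep : iIndepFun Z ℙ)
    (hexp : ∀ k, Measure.map (Z k) ℙ = expMeasure 1) :
    ∀ j : ℕ,
      ℙ {ω | (∑' k : ℕ, (2 : ℝ) ^ (-((k : ℤ) + 1)) * Z k ω) ≤ (2 : ℝ) ^ (-(j : ℤ))}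
        ≤ ENNReal.ofReal ((2 : ℝ) ^ (-((j * (j - 1) / 2 : ℕ) : ℤ))) := by
  intro j
  set c : ℕ → ℝ := fun k => (2:ℝ) ^ ((k:ℤ) + 1 - (j:ℤ)) with hc
  have hcpos : ∀ k, 0 < c k := fun k => zpow_pos (by norm_num) _
  have hIic : ∀ (k : ℕ) (x : ℝ), ℙ (Z k ⁻¹' Iic x) = expMeasure 1 (Iic x) := by
    intro k x
    rw [← hexp k, Measure.map_apply (hmeas k) measurableSet_Iic]
  have hneg : ∀ k : ℕ, ℙ (Z k ⁻¹' Iio 0) = 0 := by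
    intro k
    have h := Measure.map_apply (μ := (ℙ : Measure Ω)) (hmeas k) (measurableSet_Iio (a := (0:ℝ)))
    rw [hexp k, aux_expMeasure_Iio] at h
    exact h.symm
  have hae1 : ∀ᵐ ω ∂ℙ, ∀ k, 0 ≤ Z k ω := by
    rw [ae_all_iff]
    intro k
    rw [ae_iff]
    simp only [not_le]
    exact hneg k
  have hc'pos : ∀ k : ℕ, (0:ℝ) < (2:ℝ) ^ (-((k:ℤ) + 1)) :=
    fun k => zpow_pos (by norm_num) _
  have hsum_c : Summable (fun k : ℕ => (2:ℝ) ^ (-((k:ℤ) + 1))) := by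
    have hc' : ∀ k : ℕ, (2:ℝ) ^ (-((k:ℤ) + 1)) = (2⁻¹:ℝ) ^ k * 2⁻¹ := by
      intro k
      rw [← pow_succ, ← zpow_natCast (2⁻¹:ℝ) (k+1), inv_zpow, ← zpow_neg]
      norm_num
    simp only [hc']
    exact (summable_geometric_of_lt_one (by norm_num) (by norm_num : (2⁻¹:ℝ) < 1)).mul_right _
  set g : ℕ → Ω → ℝ≥0∞ :=
    fun k ω => ENNReal.ofReal ((2:ℝ) ^ (-((k:ℤ) + 1))) * ENNReal.ofReal (Z k ω) with hg
  have hgmeas : ∀ k, Measurable (g k) := fun k => ((hmeas k).ennreal_ofReal).const_mul _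
  have hfin : ∫⁻ ω, (∑' k, g k ω) ∂ℙ ≠ ∞ := by
    rw [lintegral_tsum (fun k => (hgmeas k).aemeasurable)]
    have hone : ∀ k : ℕ, ∫⁻ ω, g k ω ∂ℙ
        = ENNReal.ofReal ((2:ℝ) ^ (-((k:ℤ) + 1))) * ∫⁻ x, ENNReal.ofReal x ∂(expMeasure 1) := by
      intro k
      rw [hg]
      rw [lintegral_const_mul _ (hmeas k).ennreal_ofReal]
      congr 1
      rw [← hexp k]
      exact (lintegral_map ENNReal.measurable_ofReal (hmeas k)).symm
    simp only [hone]
    rw [ENNReal.tsum_mul_right]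
    refine ENNReal.mul_ne_top ?_ aux_moment
    rw [← ENNReal.ofReal_tsum_of_nonneg (fun k => (hc'pos k).le) hsum_c]
    exact ENNReal.ofReal_ne_top
  have hae2 : ∀ᵐ ω ∂ℙ, (∑' k, g k ω) < ∞ := ae_lt_top (Measurable.ennreal_tsum hgmeas) hfin
  have hsub : {ω | (∑' k : ℕ, (2:ℝ) ^ (-((k:ℤ) + 1)) * Z k ω) ≤ (2:ℝ) ^ (-(j:ℤ))} ≤ᵐ[ℙ]
      (⋂ k ∈ Finset.range j, Z k ⁻¹' Iic (c k)) := by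
    filter_upwards [hae1, hae2] with ω h1 h2
    intro hE
    refine Set.mem_iInter₂.mpr fun k hk => ?_
    rw [Set.mem_preimage, Set.mem_Iic]
    replace hE : (∑' k : ℕ, (2:ℝ) ^ (-((k:ℤ) + 1)) * Z k ω) ≤ (2:ℝ) ^ (-(j:ℤ)) := hE
    have hsummable : Summable (fun k : ℕ => (2:ℝ) ^ (-((k:ℤ) + 1)) * Z k ω) := by
      refine (ENNReal.summable_toReal h2.ne).congr fun i => ?_
      rw [hg]
      rw [ENNReal.toReal_mul, ENNReal.toReal_ofReal (hc'pos i).le,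
        ENNReal.toReal_ofReal (h1 i)]
    have hle : (2:ℝ) ^ (-((k:ℤ) + 1)) * Z k ω ≤ (2:ℝ) ^ (-(j:ℤ)) :=
      le_trans (Summable.le_tsum hsummable k (fun i _ => mul_nonneg (hc'pos i).le (h1 i))) hE
    have hkey : (2:ℝ) ^ (-((k:ℤ) + 1)) * c k = (2:ℝ) ^ (-(j:ℤ)) := by
      rw [hc, ← zpow_add₀ (by norm_num : (2:ℝ) ≠ 0)]
      congr 1
      ring
    exact le_of_mul_le_mul_left (hle.trans_eq hkey.symm) (hc'pos k)
  calc ℙ {ω | (∑' k : ℕ, (2:ℝ) ^ (-((k:ℤ) + 1)) * Z k ω) ≤ (2:ℝ) ^ (-(j:ℤ))}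
      ≤ ℙ (⋂ k ∈ Finset.range j, Z k ⁻¹' Iic (c k)) := measure_mono_ae hsub
    _ = ∏ k ∈ Finset.range j, ℙ (Z k ⁻¹' Iic (c k)) :=
        hindep.meas_biInter (fun k _ => ⟨Iic (c k), measurableSet_Iic, rfl⟩)
    _ ≤ ∏ k ∈ Finset.range j, ENNReal.ofReal (c k) := by
        refine Finset.prod_le_prod' fun k _ => ?_
        rw [hIic, aux_expMeasure_Iic, if_pos (hcpos k).le]
        apply ENNReal.ofReal_le_ofReal
        linarith [Real.add_one_le_exp (-(1 * c k))]
    _ = ENNReal.ofReal ((2 : ℝ) ^ (-((j * (j - 1) / 2 : ℕ) : ℤ))) := by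
        rw [← ENNReal.ofReal_prod_of_nonneg (fun k _ => (hcpos k).le)]
        rw [hc, aux_prod_zpow (fun k => (k:ℤ) + 1 - (j:ℤ)), aux_sum_exponent]
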